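/- Consider partial functions with the pointwise refinement order. (i) For every f : α →. β, setting D := {a : α // (f a).Dom}, L f : α →. D the partial function defined exactly on the domain of f sending a to ⟨a, h⟩, and R f : D →. β the total function sending ⟨a, h⟩ to (f a).get h, one has f = (R f).comp (L f), L f is injective on its domain, and R f is total. (ii) Every partial function that is injective on its domain is laxly weakly orthogonal to every total partial function: for f : α →. β injective on its domain, g : γ →. δ total, and every lax square g.comp u ≤ v.comp f there exists d : β →. γ with u ≤ d.comp f and g.comp d ≤ v. -/

import Mathlib

universe u

/-- `f ≤ g` pointwise: every value of `f a` is a value of `g a`. -/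
def PFunLE {α β : Type u} (f g : α →. β) : Prop := ∀ a, f a ≤ g a

/-- `f` is total: defined everywhere. -/
def PFun.Total {α β : Type u} (f : α →. β) : Prop := ∀ a, (f a).Dom

/-- `f` is injective on its domain. -/
def PFun.InjOnDom {α β : Type u} (f : α →. β) : Prop :=
  ∀ ⦃a a' : α⦄ ⦃b : β⦄, b ∈ f a → b ∈ f a' → a = a'

/-- `f` is laxly weakly orthogonal to `g`: every lax square `(u, v) : f → g`
(`g.comp u ≤ v.comp f`) admits a lax diagonal. -/
def PFun.LaxOrthP {α β γ δ : Type u} (f : α →. β) (g : γ →. δ) : Prop :=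
  ∀ (u : α →. γ) (v : β →. δ), PFunLE (g.comp u) (v.comp f) →
    ∃ d : β →. γ, PFunLE u (d.comp f) ∧ PFunLE (g.comp d) v

/-- The left factor of the domain-total factorisation: defined exactly on the domain
of `f`, sending `a` to `⟨a, h⟩`. -/
def PFun.domL {α β : Type u} (f : α →. β) : α →. {a : α // (f a).Dom} :=
  fun a => ⟨(f a).Dom, fun h => ⟨a, h⟩⟩

/-- The right factor of the domain-total factorisation: the total function sending
`⟨a, h⟩` to `(f a).get h`. -/
def PFun.domR {α β : Type u} (f : α →. β) : {a : α // (f a).Dom} →. β :=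
  fun p => Part.some ((f p.1).get p.2)

/-- (i) Every partial function factors as a domain restriction followed by a total map;
(ii) every partial function injective on its domain is laxly weakly orthogonal to every
total partial function. -/
theorem stmt12 :
    (∀ {α β : Type u} (f : α →. β),
      f = (f.domR).comp f.domL ∧ PFun.InjOnDom f.domL ∧ PFun.Total f.domR) ∧
    (∀ {α β γ δ : Type u} (f : α →. β) (g : γ →. δ),
      PFun.InjOnDom f → PFun.Total g → PFun.LaxOrthP f g) := by
  constructor
  · intro α β f
    refine ⟨?_, ?_, ?_⟩
    · funext a
      apply Part.ext
      intro b
      simp only [PFun.comp_apply, PFun.domL, PFun.domR]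
      erw [Part.mem_bind_iff]
      constructor
      · rintro hb
        exact ⟨⟨a, hb.1⟩, ⟨hb.1, rfl⟩, Part.mem_some_iff.mpr (Part.get_eq_of_mem hb _).symm⟩
      · rintro ⟨p, ⟨h, hp⟩, hb⟩
        erw [Part.mem_some_iff] at hb
        subst hb; subst hp
        exact Part.get_mem _
    · rintro a a' p hp hp'
      obtain ⟨h, rfl⟩ := hp
      obtain ⟨h', h2⟩ := hp'
      exact congrArg Subtype.val h2.symm
    · intro p; trivial
  · intro α β γ δ f g hf hg u v hsq
    -- u is only defined where f is
    have hdom : ∀ a, (u a).Dom → (f a).Dom := by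
      intro a ha
      have : ((u a).get ha) ∈ u a := Part.get_mem ha
      have hc : (g ((u a).get ha)).get (hg _) ∈ (g.comp u) a := by
        erw [PFun.comp_apply, Part.mem_bind_iff]
        exact ⟨_, this, Part.get_mem _⟩
      have := hsq a _ hc
      erw [PFun.comp_apply, Part.mem_bind_iff] at this
      obtain ⟨b, hb, -⟩ := this
      exact Part.dom_iff_mem.mpr ⟨b, hb⟩
    refine ⟨fun b => ⟨∃ a, b ∈ f a ∧ (u a).Dom,
      fun h => (u h.choose).get h.choose_spec.2⟩, ?_, ?_⟩
    · intro a c hc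
      have hu : (u a).Dom := Part.dom_iff_mem.mpr ⟨c, hc⟩
      have hfa := hdom a hu
      erw [PFun.comp_apply, Part.mem_bind_iff]
      obtain ⟨b, hbf⟩ : ∃ b, b ∈ f a := Part.dom_iff_mem.mp hfa
      refine ⟨b, hbf, ?_⟩
      have hd : ∃ a', b ∈ f a' ∧ (u a').Dom := ⟨a, hbf, hu⟩
      refine ⟨hd, ?_⟩
      have heq : hd.choose = a := hf hd.choose_spec.1 hbf
      subst heq
      exact Part.get_eq_of_mem hc _
    · intro b e he
      erw [PFun.comp_apply, Part.mem_bind_iff] at he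
      obtain ⟨c, ⟨hd, hc⟩, hec⟩ := he
      obtain ⟨hbf, hu⟩ := hd.choose_spec
      have hcu : c ∈ u hd.choose := hc ▸ Part.get_mem hu
      have hgu : e ∈ (g.comp u) hd.choose := by
        erw [PFun.comp_apply, Part.mem_bind_iff]; exact ⟨c, hcu, hec⟩
      have := hsq _ _ hgu
      erw [PFun.comp_apply, Part.mem_bind_iff] at this
      obtain ⟨b', hb', hev⟩ := this
      rwa [Part.mem_unique hb' hbf] at hev
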